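/- In the rank-one perturbation setting, for any two distinct parameters γ ≠ β in ℝ, the singular parts (with respect to Lebesgue measure) of the spectral measures μ_γ and μ_β are mutually singular. -/

import Mathlib

open MeasureTheory Filter Set Complex
open scoped ENNReal Topology InnerProductSpace

variable {H : Type*} [NormedAddCommGroup H] [InnerProductSpace ℂ H] [CompleteSpace H]

/-- The rank-one perturbation `A_γ = A + γ (·,φ)φ` of a (possibly unbounded) operator `A`. -/
noncomputable def rankOnePert (A : H →ₗ.[ℂ] H) (φ : H) (γ : ℝ) : H →ₗ.[ℂ] H :=
  ⟨A.domain, A.toFun + (γ : ℂ) •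
    ((((innerSL ℂ φ).smulRight φ : H →L[ℂ] H) : H →ₗ[ℂ] H).comp A.domain.subtype)⟩

/-- The Borel transform `F(z) = ∫ dμ(t) / (t - z)` of a measure `μ` on `ℝ`. -/
noncomputable def borelTransform (μ : Measure ℝ) (z : ℂ) : ℂ :=
  ∫ t : ℝ, ((t : ℂ) - z)⁻¹ ∂μ

/-- The integrand of the Borel transform is integrable when `Im z ≠ 0`. -/
lemma borel_integrable (μ : Measure ℝ) [IsFiniteMeasure μ] (z : ℂ) (hz : z.im ≠ 0) :
    Integrable (fun t : ℝ => ((t : ℂ) - z)⁻¹) μ := by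
  have hne : ∀ t : ℝ, ((t : ℂ) - z) ≠ 0 := by
    intro t h
    have := congrArg Complex.im h
    simp at this
    exact hz this
  have hcont : Continuous fun t : ℝ => ((t : ℂ) - z)⁻¹ :=
    (Complex.continuous_ofReal.sub continuous_const).inv₀ hne
  refine (integrable_const (|z.im|⁻¹)).mono' hcont.aestronglyMeasurable ?_
  refine Filter.Eventually.of_forall fun t => ?_
  rw [norm_inv]
  have h1 : |z.im| ≤ ‖(t : ℂ) - z‖ := by
    have : |((t : ℂ) - z).im| ≤ ‖(t : ℂ) - z‖ := Complex.abs_im_le_norm _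
    simpa [Complex.sub_im, abs_neg] using this
  exact inv_anti₀ (abs_pos.mpr hz) h1

/-- Pointwise lower bound: `Im F(x + i r) ≥ μ(closedBall x r)/(2 r)`. -/
lemma borel_im_lower (μ : Measure ℝ) [IsFiniteMeasure μ] (x r : ℝ) (hr : 0 < r) :
    (μ (Metric.closedBall x r)).toReal / (2 * r)
      ≤ (borelTransform μ ((x : ℂ) + (r : ℂ) * I)).im := by
  set z : ℂ := (x : ℂ) + (r : ℂ) * I with hzdef
  have hzre : z.re = x := by simp [hzdef]
  have hzim : z.im = r := by simp [hzdef]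
  have hz : z.im ≠ 0 := by rw [hzim]; exact hr.ne'
  have hint : Integrable (fun t : ℝ => ((t : ℂ) - z)⁻¹) μ := borel_integrable μ z hz
  have hform : ∀ t : ℝ, (((t : ℂ) - z)⁻¹).im = r / ((t - x) ^ 2 + r ^ 2) := by
    intro t
    rw [Complex.inv_im]
    simp only [Complex.sub_im, Complex.sub_re, Complex.ofReal_im, Complex.ofReal_re,
      Complex.normSq_apply, hzim, hzre]
    ring
  have hnonneg : ∀ t : ℝ, 0 ≤ (((t : ℂ) - z)⁻¹).im := by
    intro t; rw [hform]; positivity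
  have him : ∫ t, (((t : ℂ) - z)⁻¹).im ∂μ = (borelTransform μ z).im := by
    have := integral_im (𝕜 := ℂ) hint
    simpa [borelTransform] using this
  have hμcb : μ (Metric.closedBall x r) ≠ ∞ := measure_ne_top μ _
  have hlow : ∀ t ∈ Metric.closedBall x r, 1 / (2 * r) ≤ (((t : ℂ) - z)⁻¹).im := by
    intro t ht
    rw [hform]
    rw [Metric.mem_closedBall, Real.dist_eq] at ht
    have h1 : (t - x) ^ 2 ≤ r ^ 2 := by
      have := abs_le.mp ht
      nlinarith
    rw [div_le_div_iff₀ (by positivity) (by positivity)]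
    nlinarith
  calc (μ (Metric.closedBall x r)).toReal / (2 * r)
      = (1 / (2 * r)) * (μ (Metric.closedBall x r)).toReal := by ring
    _ ≤ ∫ t in Metric.closedBall x r, (((t : ℂ) - z)⁻¹).im ∂μ :=
        setIntegral_ge_of_const_le_real measurableSet_closedBall hμcb hlow hint.im.integrableOn
    _ ≤ ∫ t, (((t : ℂ) - z)⁻¹).im ∂μ :=
        setIntegral_le_integral hint.im (Filter.Eventually.of_forall hnonneg)
    _ = (borelTransform μ z).im := him

/-- A finite measure singular w.r.t. Lebesgue has infinite symmetric derivative a.e. -/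
lemma sing_ae_tendsto (ν : Measure ℝ) [IsFiniteMeasure ν] (hsing : ν.MutuallySingular volume) :
    ∀ᵐ x ∂ν, Tendsto
      (fun n : ℕ => (ν (Metric.closedBall x (1 / ((n : ℝ) + 1)))).toReal
        / (2 * (1 / ((n : ℝ) + 1)))) atTop atTop := by
  have hvz := (Besicovitch.vitaliFamily ν).ae_eventually_measure_zero_of_singular
    (ρ := volume) hsing.symm
  have hseq : Tendsto (fun n : ℕ => 1 / ((n : ℝ) + 1)) atTop (𝓝[>] (0 : ℝ)) := by
    apply tendsto_nhdsWithin_of_tendsto_nhds_of_eventually_within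
    · exact tendsto_one_div_add_atTop_nhds_zero_nat
    · exact Filter.Eventually.of_forall fun n => Set.mem_Ioi.mpr (by positivity)
  filter_upwards [hvz] with x hx
  have hx2 : Tendsto (fun n : ℕ =>
      volume (Metric.closedBall x (1 / ((n : ℝ) + 1)))
        / ν (Metric.closedBall x (1 / ((n : ℝ) + 1)))) atTop (𝓝 0) :=
    hx.comp ((Besicovitch.tendsto_filterAt ν x).comp hseq)
  rw [tendsto_atTop]
  intro M
  rcases le_or_gt M 0 with hM | hM
  · refine Filter.Eventually.of_forall fun n => le_trans hM (div_nonneg ENNReal.toReal_nonneg (by positivity))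
  · have hε : (0 : ℝ≥0∞) < ENNReal.ofReal (1 / M) := ENNReal.ofReal_pos.mpr (by positivity)
    filter_upwards [hx2.eventually_lt_const hε] with n hn
    set r : ℝ := 1 / ((n : ℝ) + 1) with hrdef
    have hr : 0 < r := by positivity
    have hvol : volume (Metric.closedBall x r) = ENNReal.ofReal (2 * r) := by
      rw [Real.volume_closedBall]
    have hb0 : ν (Metric.closedBall x r) ≠ 0 := by
      intro h0
      rw [hvol, h0, ENNReal.div_zero (ENNReal.ofReal_pos.mpr (by positivity)).ne'] at hn
      exact absurd hn (by simp)
    have hbt : ν (Metric.closedBall x r) ≠ ∞ := measure_ne_top ν _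
    rw [ENNReal.div_lt_iff (Or.inl hb0) (Or.inl hbt)] at hn
    have hle : ENNReal.ofReal (M * (2 * r)) ≤ ν (Metric.closedBall x r) := by
      have h1 : ENNReal.ofReal M * volume (Metric.closedBall x r)
          ≤ ENNReal.ofReal M * (ENNReal.ofReal (1 / M) * ν (Metric.closedBall x r)) := by
        exact mul_le_mul_right hn.le _
      rw [← mul_assoc, ← ENNReal.ofReal_mul hM.le] at h1
      rw [mul_one_div, div_self hM.ne', ENNReal.ofReal_one, one_mul] at h1
      calc ENNReal.ofReal (M * (2 * r)) = ENNReal.ofReal M * ENNReal.ofReal (2 * r) :=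
            ENNReal.ofReal_mul hM.le
        _ = ENNReal.ofReal M * volume (Metric.closedBall x r) := by rw [hvol]
        _ ≤ ν (Metric.closedBall x r) := h1
    have := (ENNReal.ofReal_le_iff_le_toReal hbt).mp hle
    rw [le_div_iff₀ (by positivity)]
    linarith [this]

/-- **Aronszajn–Donoghue, mutual singularity**: for distinct parameters `γ ≠ β`, the singular
parts (w.r.t. Lebesgue measure) of the spectral measures `μ_γ` and `μ_β` are mutually
singular. -/
theorem aronszajnDonoghue_singular_parts_mutuallySingular
    [TopologicalSpace.SeparableSpace H]
    (A : H →ₗ.[ℂ] H) (hA : IsSelfAdjoint A)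
    (φ : H) (hφ : ‖φ‖ = 1)
    (R : ℝ → ℂ → H →L[ℂ] H)
    (hR1 : ∀ (γ : ℝ) (z : ℂ), z.im ≠ 0 → ∀ x : H,
      ∃ h : R γ z x ∈ (rankOnePert A φ γ).domain,
        (rankOnePert A φ γ) ⟨R γ z x, h⟩ - z • R γ z x = x)
    (hR2 : ∀ (γ : ℝ) (z : ℂ), z.im ≠ 0 → ∀ y (hy : y ∈ (rankOnePert A φ γ).domain),
      R γ z ((rankOnePert A φ γ) ⟨y, hy⟩ - z • y) = y)
    (hcyc : (Submodule.span ℂ {x : H | ∃ z : ℂ, z.im ≠ 0 ∧ x = R 0 z φ}).topologicalClosure = ⊤)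
    (μ : ℝ → Measure ℝ) (hfin : ∀ γ, IsFiniteMeasure (μ γ))
    (hμ : ∀ (γ : ℝ) (z : ℂ), z.im ≠ 0 → ⟪φ, R γ z φ⟫_ℂ = borelTransform (μ γ) z)
    (γ β : ℝ) (hγβ : γ ≠ β) :
    ((μ γ).singularPart volume).MutuallySingular ((μ β).singularPart volume) := by
  haveI := hfin γ; haveI := hfin β
  set c : ℂ := (γ : ℂ) - (β : ℂ) with hc
  have hcre : c = ((γ - β : ℝ) : ℂ) := by push_cast [hc]; ring
  have hcne : (γ : ℂ) ≠ (β : ℂ) := by exact_mod_cast hγβ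
  -- The key algebraic identity between the two Borel transforms.
  have key : ∀ z : ℂ, z.im ≠ 0 →
      (1 - c * borelTransform (μ γ) z) * (1 + c * borelTransform (μ β) z) = 1 := by
    intro z hz
    obtain ⟨h, hu⟩ := hR1 γ z hz φ
    have h' : R γ z φ ∈ (rankOnePert A φ β).domain := h
    have happ : ∀ δ : ℝ, ∀ hh : R γ z φ ∈ (rankOnePert A φ δ).domain,
        (rankOnePert A φ δ) ⟨R γ z φ, hh⟩
          = A.toFun ⟨R γ z φ, hh⟩ + (δ : ℂ) • (⟪φ, R γ z φ⟫_ℂ • φ) := fun δ hh => rfl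
    have e2 : (rankOnePert A φ β) ⟨R γ z φ, h'⟩ - z • R γ z φ
        = φ + ((((β : ℂ) - γ) * ⟪φ, R γ z φ⟫_ℂ)) • φ := by
      have e1 : (rankOnePert A φ β) ⟨R γ z φ, h'⟩
          = (rankOnePert A φ γ) ⟨R γ z φ, h⟩
            + (((β : ℂ) - γ) * ⟪φ, R γ z φ⟫_ℂ) • φ := by
        rw [happ β h', happ γ h]
        module
      rw [e1, add_sub_right_comm, hu]
    have e3 : ⟪φ, R γ z φ⟫_ℂ
        = ⟪φ, R β z φ⟫_ℂ + (((β : ℂ) - γ) * ⟪φ, R γ z φ⟫_ℂ) * ⟪φ, R β z φ⟫_ℂ := by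
      conv_lhs => rw [← hR2 β z hz (R γ z φ) h', e2]
      rw [map_add, (R β z).map_smul, inner_add_right, inner_smul_right]
    rw [hμ γ z hz, hμ β z hz] at e3
    linear_combination (-c) * e3
  -- the sets where the imaginary part of the Borel transform blows up
  set T : ℝ → Set ℝ := fun δ => {x : ℝ | Tendsto (fun n : ℕ =>
      (borelTransform (μ δ) ((x : ℂ) + ((1 / ((n : ℝ) + 1) : ℝ) : ℂ) * I)).im)
      atTop atTop} with hT
  -- the singular parts are carried by these sets
  have hcarry : ∀ δ : ℝ, ((μ δ).singularPart volume) ((T δ)ᶜ) = 0 := by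
    intro δ
    haveI := hfin δ
    have hae := sing_ae_tendsto ((μ δ).singularPart volume)
      (Measure.mutuallySingular_singularPart (μ δ) volume)
    have hmem : ∀ᵐ x ∂((μ δ).singularPart volume), x ∈ T δ := by
      filter_upwards [hae] with x hx
      refine tendsto_atTop_mono (fun n => ?_) hx
      have hr : (0 : ℝ) < 1 / ((n : ℝ) + 1) := by positivity
      refine le_trans ?_ (borel_im_lower (μ δ) x _ hr)
      have hle : ((μ δ).singularPart volume) (Metric.closedBall x (1 / ((n : ℝ) + 1)))
          ≤ (μ δ) (Metric.closedBall x (1 / ((n : ℝ) + 1))) :=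
        (Measure.singularPart_le (μ δ) volume) _
      gcongr
      · exact measure_ne_top _ _
    rw [ae_iff] at hmem
    exact hmem
  -- the two sets are disjoint
  have hdisj : ∀ x : ℝ, x ∈ T γ → x ∈ T β → False := by
    intro x hxγ hxβ
    set d : ℝ := |γ - β| with hd
    have hdpos : 0 < d := abs_pos.mpr (sub_ne_zero.mpr hγβ)
    set M : ℝ := 1 / d + 1 with hM
    have hMpos : 0 < M := by positivity
    have hev := (hxγ.eventually_ge_atTop M).and (hxβ.eventually_ge_atTop M)
    obtain ⟨n, hnγ, hnβ⟩ := hev.exists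
    set r : ℝ := 1 / ((n : ℝ) + 1) with hrdef
    have hr : (0 : ℝ) < r := by positivity
    set z : ℂ := (x : ℂ) + ((r : ℝ) : ℂ) * I with hzdef
    have hzim : z.im = r := by simp [hzdef]
    have hz : z.im ≠ 0 := by rw [hzim]; exact hr.ne'
    set a : ℂ := borelTransform (μ γ) z with ha
    set b : ℂ := borelTransform (μ β) z with hb
    have hkey := key z hz
    have h1 : d * a.im ≤ ‖1 - c * a‖ := by
      have : |(1 - c * a).im| ≤ ‖1 - c * a‖ := Complex.abs_im_le_norm _
      have him : (1 - c * a).im = -((γ - β) * a.im) := by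
        rw [hcre]; simp [Complex.sub_im, Complex.mul_im]
      rw [him, abs_neg, abs_mul] at this
      calc d * a.im ≤ |γ - β| * |a.im| := by
            rw [← hd]; gcongr; exact le_abs_self _
        _ ≤ ‖1 - c * a‖ := this
    have h2 : d * b.im ≤ ‖1 + c * b‖ := by
      have : |(1 + c * b).im| ≤ ‖1 + c * b‖ := Complex.abs_im_le_norm _
      have him : (1 + c * b).im = (γ - β) * b.im := by
        rw [hcre]; simp [Complex.add_im, Complex.mul_im]
      rw [him, abs_mul] at this
      calc d * b.im ≤ |γ - β| * |b.im| := by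
            rw [← hd]; gcongr; exact le_abs_self _
        _ ≤ ‖1 + c * b‖ := this
    have haim : M ≤ a.im := hnγ
    have hbim : M ≤ b.im := hnβ
    have hprod : ‖1 - c * a‖ * ‖1 + c * b‖ = 1 := by
      rw [← norm_mul, hkey, norm_one]
    have hfinal : (d * M) * (d * M) ≤ 1 := by
      rw [← hprod]
      have hda : 0 ≤ d * M := by positivity
      refine mul_le_mul ?_ ?_ hda ((norm_nonneg _))
      · exact le_trans (by gcongr) h1
      · exact le_trans (by gcongr) h2
    have : d * M = 1 + d := by
      rw [hM]; field_simp
    rw [this] at hfinal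
    nlinarith
  refine Measure.MutuallySingular.mk (s := (T γ)ᶜ) (t := (T β)ᶜ)
    (hcarry γ) (hcarry β) ?_
  intro x _
  by_cases hx : x ∈ T γ
  · exact Or.inr fun hx' => hdisj x hx hx'
  · exact Or.inl hx
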